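/- Let q₁=(1,0,0), q₂=(1,1,0), q₃=(0,1,0), q₄=(0,1,1), q₅=(1,0,1), q₆=(0,0,1) in ℝ³. Then the intersection, over i = 1,…,6, of the convex cones generated by the five vectors {q_j : j ≠ i} equals the convex cone generated by {q₂, q₄, q₅} = {(1,1,0),(0,1,1),(1,0,1)}. (This is the moving cone Mov(Q) of Example 4.) -/

import Mathlib

def coneGen (S : Set (Fin 3 → ℝ)) : Set (Fin 3 → ℝ) :=
  {x | ∃ (n : ℕ) (c : Fin n → ℝ) (v : Fin n → (Fin 3 → ℝ)),
      (∀ i, 0 ≤ c i) ∧ (∀ i, v i ∈ S) ∧ x = ∑ i, c i • v i}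

def q1 : Fin 3 → ℝ := ![1, 0, 0]
def q2 : Fin 3 → ℝ := ![1, 1, 0]
def q3 : Fin 3 → ℝ := ![0, 1, 0]
def q4 : Fin 3 → ℝ := ![0, 1, 1]
def q5 : Fin 3 → ℝ := ![1, 0, 1]
def q6 : Fin 3 → ℝ := ![0, 0, 1]

lemma halfspace {S : Set (Fin 3 → ℝ)} (a b c : ℝ)
    (hS : ∀ v ∈ S, 0 ≤ a * v 0 + b * v 1 + c * v 2)
    {x : Fin 3 → ℝ} (hx : x ∈ coneGen S) :
    0 ≤ a * x 0 + b * x 1 + c * x 2 := by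
  obtain ⟨n, co, v, hc, hv, rfl⟩ := hx
  have h0 : (∑ i, co i • v i) 0 = ∑ i, co i * v i 0 := by
    simp [Finset.sum_apply]
  have h1 : (∑ i, co i • v i) 1 = ∑ i, co i * v i 1 := by
    simp [Finset.sum_apply]
  have h2 : (∑ i, co i • v i) 2 = ∑ i, co i * v i 2 := by
    simp [Finset.sum_apply]
  rw [h0, h1, h2, Finset.mul_sum, Finset.mul_sum, Finset.mul_sum,
    ← Finset.sum_add_distrib, ← Finset.sum_add_distrib]
  refine Finset.sum_nonneg fun i _ => ?_
  nlinarith [hS (v i) (hv i), hc i]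

lemma mem_coneGen {S : Set (Fin 3 → ℝ)} {n : ℕ} (c : Fin n → ℝ)
    (v : Fin n → Fin 3 → ℝ) (hc : ∀ i, 0 ≤ c i) (hv : ∀ i, v i ∈ S)
    {x : Fin 3 → ℝ} (hx : x = ∑ i, c i • v i) : x ∈ coneGen S :=
  ⟨n, c, v, hc, hv, hx⟩

lemma eta3 (x : Fin 3 → ℝ) : x = ![x 0, x 1, x 2] := by
  funext j; fin_cases j <;> rfl

theorem stmt2 :
    coneGen {q2, q3, q4, q5, q6} ∩ coneGen {q1, q3, q4, q5, q6} ∩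
      coneGen {q1, q2, q4, q5, q6} ∩ coneGen {q1, q2, q3, q5, q6} ∩
      coneGen {q1, q2, q3, q4, q6} ∩ coneGen {q1, q2, q3, q4, q5} =
    coneGen {q2, q4, q5} := by
  ext x
  constructor
  · rintro ⟨⟨⟨⟨⟨h1, h2⟩, h3⟩, h4⟩, h5⟩, h6⟩
    have i1 : 0 ≤ (-1) * x 0 + 1 * x 1 + 1 * x 2 := by
      refine halfspace _ _ _ ?_ h1
      rintro v (rfl | rfl | rfl | rfl | rfl) <;> norm_num [q2, q3, q4, q5, q6, Matrix.cons_val_two]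
    have i2 : 0 ≤ 1 * x 0 + (-1) * x 1 + 1 * x 2 := by
      refine halfspace _ _ _ ?_ h3
      rintro v (rfl | rfl | rfl | rfl | rfl) <;> norm_num [q1, q2, q4, q5, q6, Matrix.cons_val_two]
    have i3 : 0 ≤ 1 * x 0 + 1 * x 1 + (-1) * x 2 := by
      refine halfspace _ _ _ ?_ h6
      rintro v (rfl | rfl | rfl | rfl | rfl) <;> norm_num [q1, q2, q3, q4, q5, Matrix.cons_val_two]
    refine mem_coneGen
      ![(x 0 + x 1 - x 2)/2, (-(x 0) + x 1 + x 2)/2, (x 0 - x 1 + x 2)/2]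
      ![q2, q4, q5] ?_ ?_ ?_
    · intro i; fin_cases i <;> simp <;> linarith
    · intro i; fin_cases i <;> simp
    · conv_lhs => rw [eta3 x]
      simp [Fin.sum_univ_three, q2, q4, q5, Matrix.smul_cons, Matrix.smul_empty]
      all_goals (refine ⟨?_, ?_, ?_⟩ <;> ring)
  · intro hx
    have i1 : 0 ≤ (-1) * x 0 + 1 * x 1 + 1 * x 2 := by
      refine halfspace _ _ _ ?_ hx
      rintro v (rfl | rfl | rfl) <;> norm_num [q2, q4, q5, Matrix.cons_val_two]
    have i2 : 0 ≤ 1 * x 0 + (-1) * x 1 + 1 * x 2 := by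
      refine halfspace _ _ _ ?_ hx
      rintro v (rfl | rfl | rfl) <;> norm_num [q2, q4, q5, Matrix.cons_val_two]
    have i3 : 0 ≤ 1 * x 0 + 1 * x 1 + (-1) * x 2 := by
      refine halfspace _ _ _ ?_ hx
      rintro v (rfl | rfl | rfl) <;> norm_num [q2, q4, q5, Matrix.cons_val_two]
    refine ⟨⟨⟨⟨⟨?_, ?_⟩, ?_⟩, ?_⟩, ?_⟩, ?_⟩
    · refine mem_coneGen
        ![(x 0 + x 1 - x 2)/2, 0, (-(x 0) + x 1 + x 2)/2, (x 0 - x 1 + x 2)/2, 0]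
        ![q2, q3, q4, q5, q6] ?_ ?_ ?_
      · intro i; fin_cases i <;> simp <;> linarith
      · intro i; fin_cases i <;> simp
      · conv_lhs => rw [eta3 x]
        simp [Fin.sum_univ_five, q2, q3, q4, q5, q6, Matrix.smul_cons,
          Matrix.smul_empty]
        all_goals (refine ⟨?_, ?_, ?_⟩ <;> ring)
    · refine mem_coneGen
        ![(x 0 + x 1 - x 2)/2, (x 0 + x 1 - x 2)/2, (-(x 0) + x 1 + x 2)/2,
          (x 0 - x 1 + x 2)/2, 0]
        ![q1, q3, q4, q5, q6] ?_ ?_ ?_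
      · intro i; fin_cases i <;> simp <;> linarith
      · intro i; fin_cases i <;> simp
      · conv_lhs => rw [eta3 x]
        simp [Fin.sum_univ_five, q1, q3, q4, q5, q6, Matrix.smul_cons,
          Matrix.smul_empty]
        all_goals (refine ⟨?_, ?_, ?_⟩ <;> ring)
    · refine mem_coneGen
        ![0, (x 0 + x 1 - x 2)/2, (-(x 0) + x 1 + x 2)/2, (x 0 - x 1 + x 2)/2, 0]
        ![q1, q2, q4, q5, q6] ?_ ?_ ?_
      · intro i; fin_cases i <;> simp <;> linarith
      · intro i; fin_cases i <;> simp
      · conv_lhs => rw [eta3 x]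
        simp [Fin.sum_univ_five, q1, q2, q4, q5, q6, Matrix.smul_cons,
          Matrix.smul_empty]
        all_goals (refine ⟨?_, ?_, ?_⟩ <;> ring)
    · refine mem_coneGen
        ![0, (x 0 + x 1 - x 2)/2, (-(x 0) + x 1 + x 2)/2, (x 0 - x 1 + x 2)/2,
          (-(x 0) + x 1 + x 2)/2]
        ![q1, q2, q3, q5, q6] ?_ ?_ ?_
      · intro i; fin_cases i <;> simp <;> linarith
      · intro i; fin_cases i <;> simp
      · conv_lhs => rw [eta3 x]
        simp [Fin.sum_univ_five, q1, q2, q3, q5, q6, Matrix.smul_cons,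
          Matrix.smul_empty]
        all_goals (refine ⟨?_, ?_, ?_⟩ <;> ring)
    · refine mem_coneGen
        ![(x 0 - x 1 + x 2)/2, (x 0 + x 1 - x 2)/2, 0, (-(x 0) + x 1 + x 2)/2,
          (x 0 - x 1 + x 2)/2]
        ![q1, q2, q3, q4, q6] ?_ ?_ ?_
      · intro i; fin_cases i <;> simp <;> linarith
      · intro i; fin_cases i <;> simp
      · conv_lhs => rw [eta3 x]
        simp [Fin.sum_univ_five, q1, q2, q3, q4, q6, Matrix.smul_cons,
          Matrix.smul_empty]
        all_goals (refine ⟨?_, ?_, ?_⟩ <;> ring)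
    · refine mem_coneGen
        ![0, (x 0 + x 1 - x 2)/2, 0, (-(x 0) + x 1 + x 2)/2, (x 0 - x 1 + x 2)/2]
        ![q1, q2, q3, q4, q5] ?_ ?_ ?_
      · intro i; fin_cases i <;> simp <;> linarith
      · intro i; fin_cases i <;> simp
      · conv_lhs => rw [eta3 x]
        simp [Fin.sum_univ_five, q1, q2, q3, q4, q5, Matrix.smul_cons,
          Matrix.smul_empty]
        all_goals (refine ⟨?_, ?_, ?_⟩ <;> ring)
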